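/- Let G be a finite group, p a prime, and S a Sylow p-subgroup of G, and let H = {g ∈ G : gSg⁻¹ is joined to S by a path in Γ_p(G)} (the setwise stabilizer in G of the connected component of Γ_p(G) containing the vertex S). Then H is a subgroup of G, and for every g ∈ G such that p divides |H ∩ gHg⁻¹|, one has g ∈ H. -/

import Mathlib

/-- The graph `Γ_p(G)` whose vertices are the Sylow `p`-subgroups of `G`, two distinct
Sylow `p`-subgroups being adjacent exactly when their intersection is nontrivial. -/
def sylowGraph (p : ℕ) (G : Type*) [Group G] : SimpleGraph (Sylow p G) where
  Adj P Q := P ≠ Q ∧ (P : Subgroup G) ⊓ (Q : Subgroup G) ≠ ⊥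
  symm := ⟨fun P Q h => ⟨h.1.symm, by rw [inf_comm]; exact h.2⟩⟩
  loopless := ⟨fun P h => h.1 rfl⟩

section aux

variable {p : ℕ} {G : Type*} [Group G]

lemma sylow_mem_smul {g a : G} {T : Sylow p G} :
    a ∈ ((g • T : Sylow p G) : Subgroup G) ↔ g⁻¹ * a * g ∈ (T : Subgroup G) := by
  rw [Sylow.coe_subgroup_smul, Subgroup.mem_pointwise_smul_iff_inv_smul_mem]
  simp [MulAut.smul_def, mul_assoc]

lemma sylowGraph_adj_smul (g : G) {P Q : Sylow p G}
    (h : (sylowGraph p G).Adj P Q) : (sylowGraph p G).Adj (g • P) (g • Q) := by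
  refine ⟨fun he => h.1 (smul_left_cancel g he), fun hbot => h.2 ?_⟩
  rw [eq_bot_iff] at hbot ⊢
  intro x hx
  have : g * x * g⁻¹ ∈ (↑(g • P) : Subgroup G) ⊓ ↑(g • Q) := by
    rw [Subgroup.mem_inf, sylow_mem_smul, sylow_mem_smul]
    have e : g⁻¹ * (g * x * g⁻¹) * g = x := by group
    rw [e]
    exact Subgroup.mem_inf.mp hx
  simpa using hbot this

lemma sylowGraph_reachable_smul (g : G) {P Q : Sylow p G}
    (h : (sylowGraph p G).Reachable P Q) :
    (sylowGraph p G).Reachable (g • P) (g • Q) :=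
  h.map ⟨fun T => g • T, fun ha => sylowGraph_adj_smul g ha⟩

end aux

/-- Let `G` be a finite group, `p` a prime, `S` a Sylow `p`-subgroup of `G`,
and `H = {g ∈ G | g • S is joined to S by a path in Γ_p(G)}` the setwise stabilizer of the
connected component of `Γ_p(G)` containing `S`.  Then `H` is a subgroup of `G`, and every
`g ∈ G` with `p ∣ |H ∩ gHg⁻¹|` lies in `H`. -/
theorem stmt_4 {p : ℕ} (hp : p.Prime) (G : Type*) [Group G] [Finite G]
    (S : Sylow p G) :
    ∃ H : Subgroup G,
      (H : Set G) = {g : G | (sylowGraph p G).Reachable (g • S) S} ∧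
      ∀ g : G, p ∣ Nat.card ↥(H ⊓ Subgroup.map (MulAut.conj g).toMonoidHom H) → g ∈ H := by
  haveI : Fact p.Prime := ⟨hp⟩
  set H : Subgroup G :=
    { carrier := {g : G | (sylowGraph p G).Reachable (g • S) S}
      one_mem' := by
        show (sylowGraph p G).Reachable ((1 : G) • S) S
        rw [one_smul]
      mul_mem' := by
        intro a b ha hb
        simp only [Set.mem_setOf_eq] at ha hb ⊢
        rw [mul_smul]
        exact (sylowGraph_reachable_smul a hb).trans ha
      inv_mem' := by
        intro a ha
        simp only [Set.mem_setOf_eq] at ha ⊢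
        have := sylowGraph_reachable_smul a⁻¹ ha
        rw [inv_smul_smul] at this
        exact this.symm } with hHdef
  have memH : ∀ g : G, g ∈ H ↔ (sylowGraph p G).Reachable (g • S) S := fun g => Iff.rfl
  have hSH : (S : Subgroup G) ≤ H := by
    intro s hs
    rw [memH, Sylow.smul_eq_iff_mem_normalizer.mpr (Subgroup.le_normalizer hs)]
  -- key lemma
  have key : ∀ x : G, x ∈ H → orderOf x = p →
      ∃ h : G, h ∈ H ∧ x ∈ ((h • S : Sylow p G) : Subgroup G) := by
    intro x hx hord
    set x' : H := ⟨x, hx⟩ with hx'def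
    have hordx' : orderOf x' = p := by
      rw [← hord]
      exact (orderOf_injective H.subtype H.subtype_injective x').symm
    have hpg : IsPGroup p (Subgroup.zpowers x') :=
      IsPGroup.of_card (((Nat.card_zpowers x').trans hordx').trans (pow_one p).symm)
    obtain ⟨P', hP'⟩ := hpg.exists_le_sylow
    obtain ⟨h, hh⟩ := MulAction.exists_smul_eq H (S.subtype hSH) P'
    rw [Sylow.smul_subtype hSH h] at hh
    have hx'P : x' ∈ (P' : Subgroup H) := hP' (Subgroup.mem_zpowers x')
    rw [← hh, Sylow.coe_subtype, Subgroup.mem_subgroupOf] at hx'P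
    exact ⟨(h : G), h.2, by rwa [Submonoid.smul_def] at hx'P⟩
  refine ⟨H, rfl, fun g hdvd => ?_⟩
  obtain ⟨x', hordx'⟩ :=
    exists_prime_orderOf_dvd_card' (G := ↥(H ⊓ Subgroup.map (MulAut.conj g).toMonoidHom H)) p hdvd
  set x : G := (x' : G) with hxdef
  have hordx : orderOf x = p := by
    rw [← hordx']
    exact (orderOf_injective _ (Subgroup.subtype_injective _) x')
  have hxne : x ≠ 1 := by
    intro h1; rw [h1, orderOf_one] at hordx; exact hp.ne_one hordx.symm
  have hxH : x ∈ H := x'.2.1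
  have hxgH : x ∈ Subgroup.map (MulAut.conj g).toMonoidHom H := x'.2.2
  obtain ⟨y, hyH, hyx⟩ := hxgH
  have hyval : y = g⁻¹ * x * g := by
    have : g * y * g⁻¹ = x := by simpa [MulAut.conj] using hyx
    rw [← this]; group
  have hordy : orderOf y = p := by
    rw [hyval, ← hordx]
    have := orderOf_injective (MulAut.conj g⁻¹).toMonoidHom (MulEquiv.injective _) x
    simpa [MulAut.conj] using this
  obtain ⟨h₁, hh₁H, hxh₁⟩ := key x hxH hordx
  obtain ⟨h₂, hh₂H, hyh₂⟩ := key y hyH hordy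
  have hxgh₂ : x ∈ (((g * h₂) • S : Sylow p G) : Subgroup G) := by
    rw [sylow_mem_smul]
    rw [hyval] at hyh₂
    have : (g * h₂)⁻¹ * x * (g * h₂) = h₂⁻¹ * (g⁻¹ * x * g) * h₂ := by group
    rw [this]
    rw [sylow_mem_smul] at hyh₂
    exact hyh₂
  have hreach : (sylowGraph p G).Reachable (h₁ • S) ((g * h₂) • S) := by
    by_cases he : (h₁ • S : Sylow p G) = (g * h₂) • S
    · rw [he]
    · refine SimpleGraph.Adj.reachable ⟨he, fun hbot => hxne ?_⟩
      have : x ∈ ((h₁ • S : Sylow p G) : Subgroup G) ⊓ ((g * h₂) • S : Sylow p G) :=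
        ⟨hxh₁, hxgh₂⟩
      rw [hbot] at this
      simpa using this
  have hgh₂ : g * h₂ ∈ H := by
    rw [memH]
    exact hreach.symm.trans ((memH h₁).mp hh₁H)
  have := mul_mem hgh₂ (inv_mem hh₂H)
  simpa [mul_assoc] using this
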